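/- Consider any customer attraction game (with arbitrary weights, values, and strategy spaces) and any α ≥ 1. If S^α is an α-approximate pure Nash equilibrium, then for every strategy profile S it holds that SW(S) ≤ (1+α) · SW(S^α). In particular (taking α = 1), the price of anarchy over pure Nash equilibria is at most 2. -/

import Mathlib

open Finset

/-- A customer attraction game: nodes `N` with integer values `≥ 1`, agents `A`
with integer weights `≥ 1`, and a nonempty finite strategy space (a finite set of
subsets of `N`) for each agent. -/
structure CAG (N A : Type*) [Fintype N] [Fintype A] where
  v : N → ℕ
  v_pos : ∀ j, 1 ≤ v j
  w : A → ℕ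
  w_pos : ∀ i, 1 ≤ w i
  strat : A → Finset (Finset N)
  strat_ne : ∀ i, (strat i).Nonempty

variable {N A : Type*} [Fintype N] [Fintype A] [DecidableEq N]

/-- The load `c(j,S)` of node `j`: total weight of agents attracting `j`. -/
def CAG.load (G : CAG N A) (S : A → Finset N) (j : N) : ℕ :=
  ∑ i : A, if j ∈ S i then G.w i else 0

/-- The utility `U_i(S) = ∑_{j ∈ S_i} v_j · w_i / c(j,S)`. -/
noncomputable def CAG.util (G : CAG N A) (S : A → Finset N) (i : A) : ℝ :=
  ∑ j ∈ S i, (G.v j : ℝ) * (G.w i : ℝ) / (G.load S j : ℝ)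

/-- A strategy profile: each agent plays a strategy from her strategy space. -/
def CAG.valid (G : CAG N A) (S : A → Finset N) : Prop :=
  ∀ i, S i ∈ G.strat i

/-- Pure Nash equilibrium. -/
def CAG.PNE [DecidableEq A] (G : CAG N A) (S : A → Finset N) : Prop :=
  G.valid S ∧ ∀ i, ∀ S' ∈ G.strat i, G.util (Function.update S i S') i ≤ G.util S i

/-- Social welfare. -/
noncomputable def CAG.sw (G : CAG N A) (S : A → Finset N) : ℝ :=
  ∑ i : A, G.util S i

/-- The harmonic number `H_c = ∑_{k=1}^{c} 1/k`. -/
noncomputable def harm (c : ℕ) : ℝ := ∑ k ∈ Finset.range c, (1 : ℝ) / (k + 1)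

/-- Rosenthal-type potential `Φ(S) = ∑_j v_j ∑_{k=1}^{c(j,S)} 1/k`. -/
noncomputable def CAG.pot (G : CAG N A) (S : A → Finset N) : ℝ :=
  ∑ j : N, (G.v j : ℝ) * harm (G.load S j)

/-- `α`-approximate pure Nash equilibrium. -/
def CAG.approxPNE [DecidableEq A] (G : CAG N A) (α : ℝ) (S : A → Finset N) : Prop :=
  G.valid S ∧ ∀ i, ∀ S' ∈ G.strat i,
    G.util (Function.update S i S') i ≤ α * G.util S i

/-! ### Auxiliary lemmas -/

lemma load_mem_pos (G : CAG N A) (S : A → Finset N) {i : A} {j : N} (h : j ∈ S i) :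
    0 < G.load S j := by
  have h1 : G.w i ≤ G.load S j := by
    refine le_trans (le_of_eq ?_)
      (Finset.single_le_sum (f := fun k => if j ∈ S k then G.w k else 0)
        (fun k _ => by positivity) (Finset.mem_univ i))
    simp [h]
  have := G.w_pos i
  omega

lemma exists_mem_of_load_ne (G : CAG N A) (S : A → Finset N) {j : N}
    (h : G.load S j ≠ 0) : ∃ i, j ∈ S i := by
  by_contra hc
  push_neg at hc
  apply h
  unfold CAG.load
  simp [hc]

lemma sum_indicator_load (G : CAG N A) (S : A → Finset N) (j : N) :
    ∑ i : A, (if j ∈ S i then (G.w i : ℝ) else 0) = (G.load S j : ℝ) := by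
  rw [CAG.load]
  push_cast
  simp

lemma sw_eq_nodes (G : CAG N A) (S : A → Finset N) :
    G.sw S = ∑ j : N, if G.load S j = 0 then 0 else (G.v j : ℝ) := by
  unfold CAG.sw CAG.util
  have key : ∀ i : A, ∑ j ∈ S i, (G.v j : ℝ) * (G.w i : ℝ) / (G.load S j : ℝ)
      = ∑ j : N, if j ∈ S i then (G.v j : ℝ) * (G.w i : ℝ) / (G.load S j : ℝ) else 0 := by
    intro i
    rw [Finset.sum_ite_mem, Finset.univ_inter]
  simp_rw [key]
  rw [Finset.sum_comm]
  refine Finset.sum_congr rfl fun j _ => ?_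
  by_cases h : G.load S j = 0
  · have h0 : ∀ i : A,
        (if j ∈ S i then (G.v j : ℝ) * (G.w i : ℝ) / (G.load S j : ℝ) else 0) = 0 := by
      intro i
      split
      · exact absurd h (load_mem_pos G S ‹j ∈ S i›).ne'
      · rfl
    simp [h0, h]
  · have hl : (0:ℝ) < (G.load S j : ℝ) := by exact_mod_cast Nat.pos_of_ne_zero h
    have h1 : ∀ i : A,
        (if j ∈ S i then (G.v j : ℝ) * (G.w i : ℝ) / (G.load S j : ℝ) else 0)
        = (G.v j : ℝ) / (G.load S j : ℝ) * (if j ∈ S i then (G.w i : ℝ) else 0) := by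
      intro i
      split
      · ring
      · rw [mul_zero]
    simp_rw [h1]
    rw [← Finset.mul_sum, sum_indicator_load, div_mul_cancel₀ _ hl.ne', if_neg h]

lemma load_update_le [DecidableEq A] (G : CAG N A) (Sα : A → Finset N) (T : Finset N) (i : A) (j : N) :
    G.load (Function.update Sα i T) j ≤ G.load Sα j + G.w i := by
  unfold CAG.load
  calc ∑ k : A, (if j ∈ Function.update Sα i T k then G.w k else 0)
      ≤ ∑ k : A, ((if j ∈ Sα k then G.w k else 0) + if k = i then G.w i else 0) := by
        refine Finset.sum_le_sum fun k _ => ?_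
        by_cases hk : k = i
        · subst hk
          simp only [Function.update_self, if_pos rfl]
          split <;> split <;> simp
        · simp [Function.update_of_ne hk, hk]
    _ = G.load Sα j + G.w i := by
        rw [Finset.sum_add_distrib]
        unfold CAG.load
        simp

lemma load_update_pos [DecidableEq A] (G : CAG N A) (Sα : A → Finset N) {T : Finset N} (i : A) {j : N}
    (h : j ∈ T) : 0 < G.load (Function.update Sα i T) j :=
  load_mem_pos G (Function.update Sα i T) (i := i)
    (show j ∈ Function.update Sα i T i by simpa using h)

lemma util_dev_ge [DecidableEq A] (G : CAG N A) (Sα S : A → Finset N) (i : A) :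
    ∑ j ∈ S i, (G.v j : ℝ) * (G.w i : ℝ) / ((G.load Sα j : ℝ) + (G.w i : ℝ))
      ≤ G.util (Function.update Sα i (S i)) i := by
  unfold CAG.util
  rw [Function.update_self]
  refine Finset.sum_le_sum fun j hj => ?_
  have hpos : (0:ℝ) < (G.load (Function.update Sα i (S i)) j : ℝ) := by
    exact_mod_cast load_update_pos G Sα i hj
  have hle : (G.load (Function.update Sα i (S i)) j : ℝ) ≤ (G.load Sα j : ℝ) + (G.w i : ℝ) := by
    exact_mod_cast load_update_le G Sα (S i) i j
  gcongr

lemma key_ineq (G : CAG N A) (Sα S : A → Finset N) :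
    (∑ j : N, if G.load S j ≠ 0 ∧ G.load Sα j = 0 then (G.v j : ℝ) else 0)
      ≤ ∑ i : A, ∑ j ∈ S i, (G.v j : ℝ) * (G.w i : ℝ) / ((G.load Sα j : ℝ) + (G.w i : ℝ)) := by
  have key : ∀ i : A, ∑ j ∈ S i, (G.v j : ℝ) * (G.w i : ℝ) / ((G.load Sα j : ℝ) + (G.w i : ℝ))
      = ∑ j : N, if j ∈ S i then (G.v j : ℝ) * (G.w i : ℝ) / ((G.load Sα j : ℝ) + (G.w i : ℝ))
          else 0 := by
    intro i
    rw [Finset.sum_ite_mem, Finset.univ_inter]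
  simp_rw [key]
  rw [Finset.sum_comm]
  refine Finset.sum_le_sum fun j _ => ?_
  have hterm : ∀ i : A, (0:ℝ) ≤
      (if j ∈ S i then (G.v j : ℝ) * (G.w i : ℝ) / ((G.load Sα j : ℝ) + (G.w i : ℝ)) else 0) := by
    intro i
    split
    · positivity
    · exact le_rfl
  by_cases h : G.load S j ≠ 0 ∧ G.load Sα j = 0
  · obtain ⟨i0, hi0⟩ := exists_mem_of_load_ne G S h.1
    have hw : (0:ℝ) < (G.w i0 : ℝ) := by exact_mod_cast G.w_pos i0
    calc (if G.load S j ≠ 0 ∧ G.load Sα j = 0 then (G.v j : ℝ) else 0)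
        = (if j ∈ S i0 then (G.v j : ℝ) * (G.w i0 : ℝ) / ((G.load Sα j : ℝ) + (G.w i0 : ℝ))
            else 0) := by
          rw [if_pos h, if_pos hi0, h.2]
          push_cast
          rw [zero_add, mul_div_assoc, div_self hw.ne', mul_one]
      _ ≤ _ := Finset.single_le_sum (fun i _ => hterm i) (Finset.mem_univ i0)
  · rw [if_neg h]
    exact Finset.sum_nonneg fun i _ => hterm i

lemma main_bound (G : CAG N A) [DecidableEq A] (α : ℝ) (Sα : A → Finset N)
    (hNE : G.approxPNE α Sα) (S : A → Finset N) (hS : G.valid S) :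
    G.sw S ≤ (1 + α) * G.sw Sα := by
  have claimA : G.sw S ≤ G.sw Sα +
      ∑ j : N, if G.load S j ≠ 0 ∧ G.load Sα j = 0 then (G.v j : ℝ) else 0 := by
    rw [sw_eq_nodes, sw_eq_nodes, ← Finset.sum_add_distrib]
    refine Finset.sum_le_sum fun j _ => ?_
    have hv : (0:ℝ) ≤ (G.v j : ℝ) := by positivity
    split_ifs <;> simp_all <;> linarith
  calc G.sw S ≤ G.sw Sα +
        ∑ j : N, if G.load S j ≠ 0 ∧ G.load Sα j = 0 then (G.v j : ℝ) else 0 := claimA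
    _ ≤ G.sw Sα + ∑ i : A, ∑ j ∈ S i,
        (G.v j : ℝ) * (G.w i : ℝ) / ((G.load Sα j : ℝ) + (G.w i : ℝ)) :=
        add_le_add_right (key_ineq G Sα S) _
    _ ≤ G.sw Sα + ∑ i : A, G.util (Function.update Sα i (S i)) i :=
        add_le_add_right (Finset.sum_le_sum fun i _ => util_dev_ge G Sα S i) _
    _ ≤ G.sw Sα + ∑ i : A, α * G.util Sα i :=
        add_le_add_right (Finset.sum_le_sum fun i _ => hNE.2 i (S i) (hS i)) _
    _ = (1 + α) * G.sw Sα := by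
        rw [← Finset.mul_sum]
        unfold CAG.sw
        ring

/-- For any customer attraction game and any `α ≥ 1`, an
`α`-approximate pure Nash equilibrium `S^α` satisfies
`SW(S) ≤ (1+α)·SW(S^α)` for every profile `S`; in particular (with `α = 1`) every
pure Nash equilibrium achieves at least half of the optimal social welfare. -/
theorem approx_PNE_PoA_bound [DecidableEq A] (G : CAG N A) :
    (∀ α : ℝ, 1 ≤ α → ∀ Sα : A → Finset N, G.approxPNE α Sα →
      ∀ S : A → Finset N, G.valid S → G.sw S ≤ (1 + α) * G.sw Sα) ∧
    (∀ SNE : A → Finset N, G.PNE SNE →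
      ∀ S : A → Finset N, G.valid S → G.sw S ≤ 2 * G.sw SNE) := by
  constructor
  · intro α _ Sα hNE S hS
    exact main_bound G α Sα hNE S hS
  · intro SNE hNE S hS
    have h1 : G.approxPNE 1 SNE :=
      ⟨hNE.1, fun i S' hS' => by simpa using hNE.2 i S' hS'⟩
    have := main_bound G 1 SNE h1 S hS
    linarith
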